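/- If ⊲₁ and ⊲₂ are two adapted orders to A lying in the same equivalence class (same standard and costandard modules), then their intersection (as relations on I) is an adapted order in the same equivalence class. Consequently, each equivalence class of adapted posets contains a unique minimal poset with respect to inclusion of relations. -/

import Mathlib

/-!
STATEMENT 2.  Let `A` be an Artin algebra with a complete set `{S i}_{i ∈ I}` of pairwise
non-isomorphic simple modules, projective covers `P i`, and injective envelopes `J i`.
Two partial orders are equivalent if they give the same standard and costandard modules.
If `⊲₁` and `⊲₂` are adapted orders in the same equivalence class, then their intersection
is an adapted order in the same class; consequently, each equivalence class of adapted
orders contains a unique minimal (i.e. least, for inclusion of relations) partial order.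
-/

universe v u

variable (A : Type u) [Ring A]

/-- `S` is a composition factor of `M`. -/
def IsCompFactor (S M : ModuleCat.{v} A) : Prop :=
  ∃ (N N' : Submodule A M), N ≤ N' ∧
    Nonempty ((↥N' ⧸ Submodule.comap N'.subtype N) ≃ₗ[A] S)

/-- `M` has simple top isomorphic to `S`. -/
def HasSimpleTop (S M : ModuleCat.{v} A) : Prop :=
  ∃ N : Submodule A M, IsCoatom N ∧ (∀ N' : Submodule A M, IsCoatom N' → N' = N) ∧
    Nonempty ((↥M ⧸ N) ≃ₗ[A] S)

/-- `M` has simple socle isomorphic to `S`. -/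
def HasSimpleSocle (S M : ModuleCat.{v} A) : Prop :=
  ∃ N : Submodule A M, IsAtom N ∧ (∀ N' : Submodule A M, IsAtom N' → N' = N) ∧
    Nonempty (↥N ≃ₗ[A] S)

/-- The Dlab–Ringel adaptedness condition. -/
def AdaptedMod {I : Type*} (S : I → ModuleCat.{v} A) (lhd : I → I → Prop) : Prop :=
  ∀ (M : ModuleCat.{v} A) (i j : I),
    HasSimpleTop A (S i) M → HasSimpleSocle A (S j) M →
    ¬ lhd i j → ¬ lhd j i →
    ∃ k, lhd i k ∧ lhd j k ∧ IsCompFactor A (S k) M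

/-- `D` is the standard module `Δ(i)` with respect to `⊲`. -/
def IsStandardModule {I : Type*} (S P : I → ModuleCat.{v} A) (lhd : I → I → Prop)
    (i : I) (D : ModuleCat.{v} A) : Prop :=
  ∃ K : Submodule A (P i),
    Nonempty ((↥(P i) ⧸ K) ≃ₗ[A] D) ∧
    (∀ j, IsCompFactor A (S j) D → lhd j i) ∧
    ∀ N : Submodule A (P i),
      (∀ j, IsCompFactor A (S j) (ModuleCat.of A (↥(P i) ⧸ N)) → lhd j i) → K ≤ N

/-- `D` is the costandard module `∇(i)` with respect to `⊲`: the largest submodule of `J i`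
all of whose composition factors `S j` satisfy `j ⊲ i`. -/
def IsCostandardModule {I : Type*} (S J : I → ModuleCat.{v} A) (lhd : I → I → Prop)
    (i : I) (D : ModuleCat.{v} A) : Prop :=
  ∃ K : Submodule A (J i),
    Nonempty ((↥K : Type v) ≃ₗ[A] D) ∧
    (∀ j, IsCompFactor A (S j) D → lhd j i) ∧
    ∀ N : Submodule A (J i),
      (∀ j, IsCompFactor A (S j) (ModuleCat.of A ↥N) → lhd j i) → N ≤ K

/-- `P` is a projective cover of `S`. -/
def IsProjCover (P S : ModuleCat.{v} A) : Prop :=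
  Module.Projective A P ∧
  ∃ f : P →ₗ[A] S, Function.Surjective f ∧
    ∀ N : Submodule A P, N ⊔ LinearMap.ker f = ⊤ → N = ⊤

/-- `J` is an injective envelope of `S`. -/
def IsInjEnvelope (J S : ModuleCat.{v} A) : Prop :=
  Module.Injective A J ∧
  ∃ f : S →ₗ[A] J, Function.Injective f ∧
    ∀ N : Submodule A J, N ≠ ⊥ → N ⊓ LinearMap.range f ≠ ⊥

section AuxLemmas

variable {A}

theorem cf_iff {S M : ModuleCat.{v} A} :
    IsCompFactor A S M ↔
      ∃ (X : Submodule A M) (ψ : ↥X →ₗ[A] ↥S), Function.Surjective ψ := by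
  constructor
  · rintro ⟨N, N', hle, ⟨e⟩⟩
    exact ⟨N', e.toLinearMap.comp (Submodule.comap N'.subtype N).mkQ,
      e.surjective.comp (Submodule.mkQ_surjective _)⟩
  · rintro ⟨X, ψ, hψ⟩
    refine ⟨Submodule.map X.subtype (LinearMap.ker ψ), X, Submodule.map_subtype_le _ _, ⟨?_⟩⟩
    have h1 : Submodule.comap X.subtype (Submodule.map X.subtype (LinearMap.ker ψ))
        = LinearMap.ker ψ := by
      rw [Submodule.comap_map_eq, Submodule.ker_subtype, sup_bot_eq]
    exact (Submodule.quotEquivOfEq _ _ h1).trans (ψ.quotKerEquivOfSurjective hψ)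

theorem cf_of_injective {S M M' : ModuleCat.{v} A} (f : ↥M →ₗ[A] ↥M')
    (hf : Function.Injective f) (h : IsCompFactor A S M) : IsCompFactor A S M' := by
  rw [cf_iff] at h ⊢
  obtain ⟨X, ψ, hψ⟩ := h
  exact ⟨Submodule.map f X, ψ.comp (Submodule.equivMapOfInjective f hf X).symm.toLinearMap,
    hψ.comp (Submodule.equivMapOfInjective f hf X).symm.surjective⟩

theorem cf_of_surjective {S M M' : ModuleCat.{v} A} (f : ↥M →ₗ[A] ↥M')
    (hf : Function.Surjective f) (h : IsCompFactor A S M') : IsCompFactor A S M := by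
  rw [cf_iff] at h ⊢
  obtain ⟨X', ψ, hψ⟩ := h
  refine ⟨Submodule.comap f X', ψ.comp (f.restrict (fun x hx => hx)), hψ.comp ?_⟩
  rintro ⟨y, hy⟩
  obtain ⟨x, rfl⟩ := hf y
  exact ⟨⟨x, hy⟩, rfl⟩

theorem cf_congr {S M M' : ModuleCat.{v} A} (e : ↥M ≃ₗ[A] ↥M')
    (h : IsCompFactor A S M) : IsCompFactor A S M' :=
  cf_of_injective e.toLinearMap e.injective h

theorem cf_of_submodule {S M : ModuleCat.{v} A} (W : Submodule A ↥M)
    (h : IsCompFactor A S (ModuleCat.of A ↥W)) : IsCompFactor A S M :=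
  cf_of_injective (M := ModuleCat.of A ↥W) W.subtype W.injective_subtype h

theorem cf_of_quotient {S M : ModuleCat.{v} A} (Z : Submodule A ↥M)
    (h : IsCompFactor A S (ModuleCat.of A (↥M ⧸ Z))) : IsCompFactor A S M :=
  cf_of_surjective (M' := ModuleCat.of A (↥M ⧸ Z)) Z.mkQ (Submodule.mkQ_surjective Z) h

theorem cf_mono {S M : ModuleCat.{v} A} {W W' : Submodule A ↥M} (hle : W ≤ W')
    (h : IsCompFactor A S (ModuleCat.of A ↥W)) : IsCompFactor A S (ModuleCat.of A ↥W') :=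
  cf_of_injective (M := ModuleCat.of A ↥W) (M' := ModuleCat.of A ↥W')
    (Submodule.inclusion hle) (Submodule.inclusion_injective hle) h

theorem cf_cases {S M : ModuleCat.{v} A} (hS : IsSimpleModule A ↥S)
    (N : Submodule A ↥M) (h : IsCompFactor A S M) :
    IsCompFactor A S (ModuleCat.of A ↥N) ∨ IsCompFactor A S (ModuleCat.of A (↥M ⧸ N)) := by
  haveI := hS
  rw [cf_iff] at h
  obtain ⟨X, ψ, hψ⟩ := h
  set Y : Submodule A ↥X := Submodule.comap X.subtype (X ⊓ N) with hY
  have hYN : Submodule.comap X.subtype (X ⊓ N) = Submodule.comap X.subtype N := by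
    rw [Submodule.comap_inf, Submodule.comap_subtype_self, top_inf_eq]
  rcases eq_bot_or_eq_top (LinearMap.range (ψ.comp Y.subtype)) with h0 | h1
  · -- ψ kills X ⊓ N; factor of quotient
    right
    rw [cf_iff]
    set Xb : Submodule A (↥M ⧸ N) := Submodule.map N.mkQ X with hXb
    have hres : ∀ x ∈ X, N.mkQ x ∈ Xb := fun x hx => Submodule.mem_map_of_mem hx
    set ρ : ↥X →ₗ[A] ↥Xb := N.mkQ.restrict hres with hρ
    have hρs : Function.Surjective ρ := by
      rintro ⟨y, hy⟩
      rw [hXb, Submodule.mem_map] at hy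
      obtain ⟨x, hx, rfl⟩ := hy
      exact ⟨⟨x, hx⟩, rfl⟩
    have hker : LinearMap.ker ρ ≤ LinearMap.ker ψ := by
      intro x hx
      have hx' : (x : ↥M) ∈ N := by
        have : N.mkQ (x : ↥M) = 0 := congrArg Subtype.val (hx : ρ x = 0)
        simpa [Submodule.Quotient.mk_eq_zero] using this
      have hxY : x ∈ Y := by rw [hY, hYN]; exact hx'
      have : ψ.comp Y.subtype ⟨x, hxY⟩ = 0 := by
        have := LinearMap.mem_range_self (ψ.comp Y.subtype) ⟨x, hxY⟩
        rw [h0] at this; simpa using this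
      simpa using this
    -- surjection from Xb to S
    have hmapq : Function.Surjective
        ⇑(Submodule.mapQ (LinearMap.ker ρ) (LinearMap.ker ψ) LinearMap.id hker) := by
      intro z
      obtain ⟨x, rfl⟩ := Submodule.mkQ_surjective (LinearMap.ker ψ) z
      exact ⟨Submodule.Quotient.mk x, by simp [Submodule.mapQ_apply, Submodule.mkQ_apply]⟩
    refine ⟨Xb, (ψ.quotKerEquivOfSurjective hψ).toLinearMap.comp
        ((Submodule.mapQ (LinearMap.ker ρ) (LinearMap.ker ψ) LinearMap.id hker).comp
          (ρ.quotKerEquivOfSurjective hρs).symm.toLinearMap), ?_⟩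
    simp only [LinearMap.coe_comp, LinearEquiv.coe_coe]
    exact ((ψ.quotKerEquivOfSurjective hψ).surjective.comp hmapq).comp
        (ρ.quotKerEquivOfSurjective hρs).symm.surjective
  · -- factor of N
    left
    rw [cf_iff]
    have hsurj : Function.Surjective (ψ.comp Y.subtype) := by
      rw [← LinearMap.range_eq_top]; exact h1
    have e : ↥(Submodule.comap N.subtype (X ⊓ N)) ≃ₗ[A] ↥Y :=
      (Submodule.comapSubtypeEquivOfLe (inf_le_right : X ⊓ N ≤ N)).trans
        (Submodule.comapSubtypeEquivOfLe (inf_le_left : X ⊓ N ≤ X)).symm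
    refine ⟨Submodule.comap N.subtype (X ⊓ N), (ψ.comp Y.subtype).comp e.toLinearMap, ?_⟩
    intro s
    obtain ⟨y, hy⟩ := hsurj s
    refine ⟨e.symm y, ?_⟩
    calc ((ψ.comp Y.subtype).comp e.toLinearMap) (e.symm y)
        = (ψ.comp Y.subtype) (e (e.symm y)) := rfl
      _ = (ψ.comp Y.subtype) y := by rw [e.apply_symm_apply]
      _ = s := hy

theorem cf_simple {S T : ModuleCat.{v} A} (hS : IsSimpleModule A ↥S)
    (hT : IsSimpleModule A ↥T) (h : IsCompFactor A S T) : Nonempty (↥T ≃ₗ[A] ↥S) := by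
  rw [cf_iff] at h
  obtain ⟨X, ψ, hψ⟩ := h
  haveI := hS
  haveI := hT
  rcases eq_bot_or_eq_top (α := Submodule A ↥T) X with rfl | rfl
  · exfalso
    have : Subsingleton ↥S := by
      constructor; intro a b
      obtain ⟨x, rfl⟩ := hψ a; obtain ⟨y, rfl⟩ := hψ b
      have : x = y := Subsingleton.elim x y
      rw [this]
    obtain ⟨a, b, hab⟩ := IsSimpleModule.nontrivial A ↥S
    exact hab (Subsingleton.elim a b)
  · set φ : ↥T →ₗ[A] ↥S := ψ.comp (Submodule.topEquiv).symm.toLinearMap with hφ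
    have hφs : Function.Surjective φ := hψ.comp (Submodule.topEquiv).symm.surjective
    rcases eq_bot_or_eq_top (α := Submodule A ↥T) (LinearMap.ker φ) with hk | hk
    · exact ⟨LinearEquiv.ofBijective φ ⟨LinearMap.ker_eq_bot.mp hk, hφs⟩⟩
    · exfalso
      have : ∀ y : ↥S, y = 0 := by
        intro y; obtain ⟨x, rfl⟩ := hφs y
        have : x ∈ LinearMap.ker φ := by rw [hk]; trivial
        exact this
      obtain ⟨a, b, hab⟩ := IsSimpleModule.nontrivial A ↥S
      exact hab (by rw [this a, this b])

theorem top_congr {S M M' : ModuleCat.{v} A} (e : ↥M ≃ₗ[A] ↥M')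
    (h : HasSimpleTop A S M) : HasSimpleTop A S M' := by
  obtain ⟨C, hC, huniq, ⟨f⟩⟩ := h
  refine ⟨Submodule.map (e : ↥M →ₗ[A] ↥M') C, ?_, ?_, ⟨((Submodule.Quotient.equiv C (Submodule.map (e : ↥M →ₗ[A] ↥M') C) e rfl).symm.trans f)⟩⟩
  · have := (Submodule.orderIsoMapComap e).isCoatom_iff C
    simpa using this.mpr hC
  · intro D hD
    have hD' : IsCoatom (Submodule.comap (e : ↥M →ₗ[A] ↥M') D) := by
      have := (Submodule.orderIsoMapComap e).symm.isCoatom_iff D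
      simpa using this.mpr hD
    have := huniq _ hD'
    calc D = Submodule.map (e : ↥M →ₗ[A] ↥M') (Submodule.comap (e : ↥M →ₗ[A] ↥M') D) := by
            rw [Submodule.map_comap_eq_of_surjective e.surjective]
      _ = Submodule.map (e : ↥M →ₗ[A] ↥M') C := by rw [this]

theorem socle_congr {S M M' : ModuleCat.{v} A} (e : ↥M ≃ₗ[A] ↥M')
    (h : HasSimpleSocle A S M) : HasSimpleSocle A S M' := by
  obtain ⟨N, hN, huniq, ⟨f⟩⟩ := h
  refine ⟨Submodule.map (e : ↥M →ₗ[A] ↥M') N, ?_, ?_, ⟨((Submodule.equivMapOfInjective (e : ↥M →ₗ[A] ↥M') e.injective N).symm.trans f)⟩⟩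
  · have := (Submodule.orderIsoMapComap e).isAtom_iff N
    simpa using this.mpr hN
  · intro D hD
    have hD' : IsAtom (Submodule.comap (e : ↥M →ₗ[A] ↥M') D) := by
      have := (Submodule.orderIsoMapComap e).symm.isAtom_iff D
      simpa using this.mpr hD
    have := huniq _ hD'
    calc D = Submodule.map (e : ↥M →ₗ[A] ↥M') (Submodule.comap (e : ↥M →ₗ[A] ↥M') D) := by
            rw [Submodule.map_comap_eq_of_surjective e.surjective]
      _ = Submodule.map (e : ↥M →ₗ[A] ↥M') N := by rw [this]

theorem exists_atom_le [IsArtinianRing A] {M : ModuleCat.{v} A} (T : Submodule A ↥M)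
    (hT : T ≠ ⊥) : ∃ X : Submodule A ↥M, IsAtom X ∧ X ≤ T := by
  obtain ⟨x, hxT, hx0⟩ := Submodule.exists_mem_ne_zero_of_ne_bot hT
  set Xs : Submodule A ↥M := Submodule.span A {x} with hXs
  have hXsT : Xs ≤ T := by rw [hXs, Submodule.span_le]; simpa using hxT
  haveI : IsArtinian A ↥Xs := isArtinian_of_fg_of_artinian Xs (Submodule.fg_span_singleton x)
  obtain ⟨Y', hY'mem, hY'min⟩ := IsArtinian.set_has_minimal
    (R := A) (M := ↥Xs) {Y' | Y' ≠ ⊥}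
    ⟨⊤, by
      simp only [Set.mem_setOf_eq, ne_eq]
      intro htop
      have hxX : x ∈ Xs := Submodule.mem_span_singleton_self x
      have : (⟨x, hxX⟩ : ↥Xs) = 0 := by
        have : (⟨x, hxX⟩ : ↥Xs) ∈ (⊤ : Submodule A ↥Xs) := trivial
        rw [htop] at this; simpa using this
      exact hx0 (by simpa using congrArg Subtype.val this)⟩
  refine ⟨Submodule.map Xs.subtype Y', ⟨?_, ?_⟩, le_trans (Submodule.map_subtype_le _ _) hXsT⟩
  · intro hbot
    apply hY'mem
    have hker : Y' ≤ LinearMap.ker Xs.subtype := by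
      intro y hy
      have h2 : Xs.subtype y ∈ Submodule.map Xs.subtype Y' := Submodule.mem_map_of_mem hy
      rw [hbot] at h2
      simpa [LinearMap.mem_ker] using h2
    rw [Submodule.ker_subtype, le_bot_iff] at hker
    exact hker
  · intro Z hZ
    have hZXs : Z ≤ Xs := le_trans hZ.le (Submodule.map_subtype_le _ _)
    set Z' : Submodule A ↥Xs := Submodule.comap Xs.subtype Z with hZ'
    have hmapZ' : Submodule.map Xs.subtype Z' = Z := by
      rw [hZ', Submodule.map_comap_subtype, inf_eq_right.mpr hZXs]
    have hZ'Y' : Z' < Y' := by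
      constructor
      · intro z hz
        have : Xs.subtype z ∈ Z := hz
        have h2 : Xs.subtype z ∈ Submodule.map Xs.subtype Y' := hZ.le this
        obtain ⟨w, hw, hwz⟩ := h2
        have : w = z := Subtype.ext hwz
        rwa [← this]
      · intro hle
        have : Submodule.map Xs.subtype Y' ≤ Z := by
          rw [← hmapZ']
          exact Submodule.map_mono hle
        exact absurd (lt_of_le_of_lt this hZ) (lt_irrefl _)
    by_contra hne
    exact hY'min Z' (by
      intro h0
      exact hne (by rw [← hmapZ', h0, Submodule.map_bot])) hZ'Y'

theorem socle_le [IsArtinianRing A] {M : ModuleCat.{v} A} {N : Submodule A ↥M}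
    (hN : IsAtom N) (huniq : ∀ N' : Submodule A ↥M, IsAtom N' → N' = N)
    (T : Submodule A ↥M) (hT : T ≠ ⊥) : N ≤ T := by
  obtain ⟨X, hX, hXT⟩ := exists_atom_le T hT
  rw [← huniq X hX]; exact hXT

theorem socle_submodule [IsArtinianRing A] {S M : ModuleCat.{v} A}
    (h : HasSimpleSocle A S M) (W : Submodule A ↥M) (hW : W ≠ ⊥) :
    HasSimpleSocle A S (ModuleCat.of A ↥W) := by
  obtain ⟨N, hN, huniq, ⟨f⟩⟩ := h
  have hNW : N ≤ W := socle_le hN huniq W hW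
  refine ⟨Submodule.comap W.subtype N, ⟨?_, ?_⟩, ?_,
    ⟨(Submodule.comapSubtypeEquivOfLe hNW).trans f⟩⟩
  · intro hbot
    apply hN.1
    rw [eq_bot_iff]
    intro x hx
    have hxW : x ∈ W := hNW hx
    have : (⟨x, hxW⟩ : ↥W) ∈ Submodule.comap W.subtype N := hx
    rw [hbot] at this
    simpa [Submodule.mem_bot] using this
  · intro Z hZ
    have h1 : Submodule.map W.subtype Z < Submodule.map W.subtype (Submodule.comap W.subtype N) := by
      constructor
      · exact Submodule.map_mono hZ.le
      · intro hle
        apply hZ.ne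
        have := Submodule.comap_mono (f := W.subtype) hle
        rw [Submodule.comap_map_eq, Submodule.comap_map_eq, Submodule.ker_subtype,
          sup_bot_eq, sup_bot_eq] at this
        exact le_antisymm hZ.le this
    rw [Submodule.map_comap_subtype, inf_eq_right.mpr hNW] at h1
    have := hN.2 _ h1
    rw [← Submodule.map_bot (f := W.subtype)] at this
    exact Submodule.map_injective_of_injective W.injective_subtype this
  · intro T' hT'
    -- map W.subtype T' is an atom of M, hence equals N
    have hmapatom : IsAtom (Submodule.map W.subtype T') := by
      constructor
      · intro hbot
        apply hT'.1
        rw [← Submodule.map_bot (f := W.subtype)] at hbot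
        exact Submodule.map_injective_of_injective W.injective_subtype hbot
      · intro Z hZ
        have hZW : Z ≤ W := le_trans hZ.le (Submodule.map_subtype_le _ _)
        have h1 : Submodule.comap W.subtype Z < T' := by
          constructor
          · intro z hz
            have h2 : W.subtype z ∈ Submodule.map W.subtype T' := hZ.le hz
            obtain ⟨w, hw, hwz⟩ := h2
            rwa [← (Subtype.ext hwz : w = z)]
          · intro hle
            apply hZ.ne
            have h4 := Submodule.map_mono (f := W.subtype) hle
            rw [Submodule.map_comap_subtype, inf_eq_right.mpr hZW] at h4
            exact le_antisymm hZ.le h4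
        have h3 := hT'.2 _ h1
        calc Z = Submodule.map W.subtype (Submodule.comap W.subtype Z) := by
              rw [Submodule.map_comap_subtype, inf_eq_right.mpr hZW]
          _ = ⊥ := by rw [h3, Submodule.map_bot]
    have := huniq _ hmapatom
    have h2 : Submodule.comap W.subtype (Submodule.map W.subtype T') =
        Submodule.comap W.subtype N := by rw [this]
    rw [Submodule.comap_map_eq, Submodule.ker_subtype, sup_bot_eq] at h2
    exact h2

theorem proper_le_coatom {M : ModuleCat.{v} A} {C : Submodule A ↥M}
    (hC : IsCoatom C) (huniq : ∀ D : Submodule A ↥M, IsCoatom D → D = C)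
    (hcoa : ∀ N : Submodule A ↥M, N ≠ ⊤ → ∃ D, IsCoatom D ∧ N ≤ D)
    (N : Submodule A ↥M) (hN : N ≠ ⊤) : N ≤ C := by
  obtain ⟨D, hD, hND⟩ := hcoa N hN
  rwa [huniq D hD] at hND

theorem top_quot {S M : ModuleCat.{v} A} (h : HasSimpleTop A S M)
    (hcoa : ∀ N : Submodule A ↥M, N ≠ ⊤ → ∃ D, IsCoatom D ∧ N ≤ D)
    (Z : Submodule A ↥M) (hZ : Z ≠ ⊤) :
    HasSimpleTop A S (ModuleCat.of A (↥M ⧸ Z)) ∧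
      (∀ N : Submodule A (↥M ⧸ Z), N ≠ ⊤ → ∃ D, IsCoatom D ∧ N ≤ D) := by
  obtain ⟨C, hC, huniq, ⟨f⟩⟩ := h
  have hple := proper_le_coatom hC huniq hcoa
  have hZC : Z ≤ C := hple Z hZ
  set Cb : Submodule A (↥M ⧸ Z) := Submodule.map Z.mkQ C with hCb
  have hCbne : Cb ≠ ⊤ := by
    intro htop
    apply hC.1
    have : Submodule.comap Z.mkQ Cb = ⊤ := by rw [htop]; exact Submodule.comap_top _
    rw [hCb, Submodule.comap_map_eq, Submodule.ker_mkQ, sup_eq_left.mpr hZC] at this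
    exact this
  have hproperle : ∀ T : Submodule A (↥M ⧸ Z), T ≠ ⊤ → T ≤ Cb := by
    intro T hT
    have h1 : Submodule.comap Z.mkQ T ≠ ⊤ := by
      intro htop
      apply hT
      rw [← Submodule.map_comap_eq_of_surjective (Submodule.mkQ_surjective Z) T, htop,
        Submodule.map_top, Submodule.range_mkQ]
    have h2 := hple _ h1
    calc T = Submodule.map Z.mkQ (Submodule.comap Z.mkQ T) :=
          (Submodule.map_comap_eq_of_surjective (Submodule.mkQ_surjective Z) T).symm
      _ ≤ Cb := Submodule.map_mono h2
  have hCbcoatom : IsCoatom Cb := by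
    refine ⟨hCbne, fun X hX => ?_⟩
    by_contra hXne
    exact absurd (hproperle X hXne) (not_le_of_gt hX)
  refine ⟨⟨Cb, hCbcoatom, ?_, ?_⟩, fun N hN => ⟨Cb, hCbcoatom, hproperle N hN⟩⟩
  · intro D hD
    have := hproperle D hD.1
    rcases eq_or_lt_of_le this with heq | hlt
    · exact heq
    · exact absurd (hD.2 _ hlt) hCbne.elim
  · exact ⟨(Submodule.quotientQuotientEquivQuotient Z C hZC).trans f⟩

theorem exists_max_avoid {M : ModuleCat.{v} A} (E : Submodule A ↥M) :
    ∃ Zb : Submodule A ↥M, Zb ⊓ E = ⊥ ∧ ∀ T, Zb < T → T ⊓ E ≠ ⊥ := by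
  obtain ⟨m, _, hm⟩ := zorn_le_nonempty₀ {Z : Submodule A ↥M | Z ⊓ E = ⊥}
    (fun c hcs hchain y hy => by
      refine ⟨sSup c, ?_, fun z hz => le_sSup hz⟩
      rw [Set.mem_setOf_eq, eq_bot_iff]
      intro x hx
      obtain ⟨hx1, hx2⟩ := Submodule.mem_inf.mp hx
      obtain ⟨z, hzc, hxz⟩ := (Submodule.mem_sSup_of_directed ⟨y, hy⟩
        (hchain.directedOn)).mp hx1
      have : x ∈ z ⊓ E := Submodule.mem_inf.mpr ⟨hxz, hx2⟩
      rw [hcs hzc] at this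
      exact this) ⊥ (by simp)
  refine ⟨m, hm.prop, fun T hT hbot => ?_⟩
  exact absurd (hm.eq_of_ge hbot hT.le).symm hT.ne

theorem socle_of_max_avoid {M : ModuleCat.{v} A} {E Zb : Submodule A ↥M} (hE : IsAtom E)
    (h1 : Zb ⊓ E = ⊥) (h2 : ∀ T, Zb < T → T ⊓ E ≠ ⊥) {SS : ModuleCat.{v} A}
    (hiso : Nonempty (↥E ≃ₗ[A] ↥SS)) :
    HasSimpleSocle A SS (ModuleCat.of A (↥M ⧸ Zb)) := by
  obtain ⟨g⟩ := hiso
  set f : ↥E →ₗ[A] (↥M ⧸ Zb) := Zb.mkQ.comp E.subtype with hfdef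
  have hf : Function.Injective f := by
    rw [← LinearMap.ker_eq_bot, eq_bot_iff]
    intro x hx
    have hx1 : (x : ↥M) ∈ Zb := by
      have : Zb.mkQ (x : ↥M) = 0 := hx
      simpa [Submodule.Quotient.mk_eq_zero] using this
    have : (x : ↥M) ∈ Zb ⊓ E := Submodule.mem_inf.mpr ⟨hx1, x.2⟩
    rw [h1] at this
    have hx0 : (x : ↥M) = 0 := by simpa [Submodule.mem_bot] using this
    simpa [Submodule.mem_bot] using Subtype.ext hx0
  have hrange : LinearMap.range f = Submodule.map Zb.mkQ E := by
    rw [hfdef, LinearMap.range_comp, Submodule.range_subtype]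
  set Eb : Submodule A (↥M ⧸ Zb) := Submodule.map Zb.mkQ E with hEb
  have e : ↥E ≃ₗ[A] ↥Eb := (LinearEquiv.ofInjective f hf).trans (LinearEquiv.ofEq _ _ hrange)
  have hEbne : Eb ≠ ⊥ := by
    intro hbot
    apply hE.1
    have hle : E ≤ Zb := by
      intro x hx
      have : Zb.mkQ x ∈ Eb := Submodule.mem_map_of_mem hx
      rw [hbot] at this
      simpa [Submodule.Quotient.mk_eq_zero] using this
    rw [eq_bot_iff, ← h1]
    exact le_inf hle le_rfl
  have hkey : ∀ T : Submodule A (↥M ⧸ Zb), T ≠ ⊥ → Eb ≤ T := by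
    intro T hT
    have hZbT : Zb < Submodule.comap Zb.mkQ T := by
      refine lt_of_le_of_ne (fun x hx => by
        simp only [Submodule.mem_comap]
        have : Zb.mkQ x = 0 := by simpa [Submodule.Quotient.mk_eq_zero] using hx
        rw [this]; exact T.zero_mem) ?_
      intro heq
      apply hT
      rw [← Submodule.map_comap_eq_of_surjective (Submodule.mkQ_surjective Zb) T, ← heq]
      rw [eq_bot_iff]
      intro x hx
      obtain ⟨y, hy, rfl⟩ := hx
      simpa [Submodule.Quotient.mk_eq_zero] using hy
    have h3 := h2 _ hZbT
    have hET : E ≤ Submodule.comap Zb.mkQ T := by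
      rcases eq_or_lt_of_le (inf_le_right : Submodule.comap Zb.mkQ T ⊓ E ≤ E) with heq | hlt
      · rw [← heq]; exact inf_le_left
      · exact absurd (hE.2 _ hlt) h3
    calc Eb = Submodule.map Zb.mkQ E := rfl
      _ ≤ Submodule.map Zb.mkQ (Submodule.comap Zb.mkQ T) := Submodule.map_mono hET
      _ = T := Submodule.map_comap_eq_of_surjective (Submodule.mkQ_surjective Zb) T
  have hEbatom : IsAtom Eb := by
    refine ⟨hEbne, fun b hb => ?_⟩
    by_contra hbne
    exact absurd (hkey b hbne) (not_le_of_gt hb)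
  refine ⟨Eb, hEbatom, ?_, ⟨e.symm.trans g⟩⟩
  intro T' hT'
  have := hkey T' hT'.1
  rcases eq_or_lt_of_le this with heq | hlt
  · exact heq.symm
  · exact absurd (hT'.2 _ hlt) hEbne.elim

theorem embed_into_injenv [IsArtinianRing A] {S M J : ModuleCat.{v} A}
    (hsoc : HasSimpleSocle A S M) (hJ : IsInjEnvelope A J S) :
    ∃ g : ↥M →ₗ[A] ↥J, Function.Injective g := by
  obtain ⟨N, hN, huniq, ⟨f⟩⟩ := hsoc
  obtain ⟨hinj, fS, hfS, _⟩ := hJ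
  obtain ⟨g, hg⟩ := hinj.out N.subtype N.injective_subtype (fS.comp f.toLinearMap)
  refine ⟨g, ?_⟩
  rw [← LinearMap.ker_eq_bot]
  by_contra hker
  have hle : N ≤ LinearMap.ker g := socle_le hN huniq _ hker
  apply hN.1
  rw [eq_bot_iff]
  intro x hx
  have h1 : g (N.subtype ⟨x, hx⟩) = fS (f ⟨x, hx⟩) := hg ⟨x, hx⟩
  have h2 : g (N.subtype ⟨x, hx⟩) = 0 := hle hx
  have h3 : f ⟨x, hx⟩ = 0 := by
    apply hfS
    rw [← h1, h2, map_zero]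
  have h4 : (⟨x, hx⟩ : ↥N) = 0 := by
    apply f.injective
    rw [h3, map_zero]
  simpa [Submodule.mem_bot] using congrArg Subtype.val h4

theorem costd_V [IsArtinianRing A] {I : Type*} {S : I → ModuleCat.{v} A}
    {Jm : I → ModuleCat.{v} A} {lhd₁ lhd₂ : I → I → Prop} {j : I} {Nb : ModuleCat.{v} A}
    (hN₁ : IsCostandardModule A S Jm lhd₁ j Nb) (hN₂ : IsCostandardModule A S Jm lhd₂ j Nb)
    {M : ModuleCat.{v} A} (hsoc : HasSimpleSocle A (S j) M)
    (hJ : IsInjEnvelope A (Jm j) (S j)) :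
    ∃ V : Submodule A ↥M,
      (∀ t, IsCompFactor A (S t) (ModuleCat.of A ↥V) → lhd₁ t j ∧ lhd₂ t j) ∧
      (∀ T : Submodule A ↥M,
        (∀ t, IsCompFactor A (S t) (ModuleCat.of A ↥T) → lhd₁ t j) → T ≤ V) ∧
      (∀ T : Submodule A ↥M,
        (∀ t, IsCompFactor A (S t) (ModuleCat.of A ↥T) → lhd₂ t j) → T ≤ V) := by
  obtain ⟨g, hg⟩ := embed_into_injenv hsoc hJ
  obtain ⟨K₁, ⟨e₁⟩, hfac₁, hmax₁⟩ := hN₁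
  obtain ⟨K₂, ⟨e₂⟩, hfac₂, hmax₂⟩ := hN₂
  -- K₁ = K₂
  have hK12 : K₁ = K₂ := by
    apply le_antisymm
    · exact hmax₂ K₁ (fun t ht => hfac₂ t (cf_congr (M := ModuleCat.of A ↥K₁) (M' := Nb) e₁ ht))
    · exact hmax₁ K₂ (fun t ht => hfac₁ t (cf_congr (M := ModuleCat.of A ↥K₂) (M' := Nb) e₂ ht))
  set V : Submodule A ↥M := Submodule.comap g K₁ with hV
  have hfacV : ∀ t, IsCompFactor A (S t) (ModuleCat.of A ↥V) → lhd₁ t j ∧ lhd₂ t j := by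
    intro t ht
    have h1 : IsCompFactor A (S t) (ModuleCat.of A ↥(Submodule.map g V)) :=
      cf_congr (M := ModuleCat.of A ↥V) (M' := ModuleCat.of A ↥(Submodule.map g V))
        (Submodule.equivMapOfInjective g hg V) ht
    have h2 : IsCompFactor A (S t) (ModuleCat.of A ↥K₁) :=
      cf_mono (M := Jm j) (Submodule.map_comap_le g K₁) h1
    have h3 : IsCompFactor A (S t) Nb := cf_congr (M := ModuleCat.of A ↥K₁) e₁ h2
    exact ⟨hfac₁ t h3, hfac₂ t h3⟩
  refine ⟨V, hfacV, ?_, ?_⟩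
  · intro T hT
    have h1 : Submodule.map g T ≤ K₁ := by
      apply hmax₁
      intro t ht
      exact hT t (cf_congr (M := ModuleCat.of A ↥(Submodule.map g T))
        (M' := ModuleCat.of A ↥T) (Submodule.equivMapOfInjective g hg T).symm ht)
    exact fun x hx => h1 (Submodule.mem_map_of_mem hx)
  · intro T hT
    have h1 : Submodule.map g T ≤ K₂ := by
      apply hmax₂
      intro t ht
      exact hT t (cf_congr (M := ModuleCat.of A ↥(Submodule.map g T))
        (M' := ModuleCat.of A ↥T) (Submodule.equivMapOfInjective g hg T).symm ht)
    rw [hV, hK12]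
    exact fun x hx => h1 (Submodule.mem_map_of_mem hx)

theorem proper_map_lt {M : ModuleCat.{v} A} (Y : Submodule A ↥M) (Z : Submodule A ↥Y)
    (h : Z ≠ ⊤) : Submodule.map Y.subtype Z < Y := by
  refine lt_of_le_of_ne (Submodule.map_subtype_le _ _) ?_
  intro heq
  apply h
  have : Submodule.comap Y.subtype (Submodule.map Y.subtype Z) =
      Submodule.comap Y.subtype Y := by rw [heq]
  rw [Submodule.comap_map_eq, Submodule.ker_subtype, sup_bot_eq,
    Submodule.comap_subtype_self] at this
  exact this

theorem cf_self_top {S M : ModuleCat.{v} A} {C : Submodule A ↥M}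
    (f : (↥M ⧸ C) ≃ₗ[A] ↥S) : IsCompFactor A S M := by
  rw [cf_iff]
  refine ⟨⊤, (f.toLinearMap.comp (C.mkQ.comp (⊤ : Submodule A ↥M).subtype)), ?_⟩
  intro s
  obtain ⟨q, hq⟩ := f.surjective s
  obtain ⟨y, rfl⟩ := Submodule.mkQ_surjective C q
  exact ⟨⟨y, trivial⟩, hq⟩

theorem exists_local_submodule [IsArtinianRing A] {S M : ModuleCat.{v} A}
    (htop : HasSimpleTop A S M) :
    ∃ W : Submodule A ↥M, W ≠ ⊥ ∧ Nonempty (IsArtinian A ↥W) ∧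
      HasSimpleTop A S (ModuleCat.of A ↥W) ∧
      (∀ N : Submodule A ↥W, N ≠ ⊤ → ∃ D, IsCoatom D ∧ N ≤ D) := by
  obtain ⟨C, hC, huniq, ⟨f⟩⟩ := htop
  obtain ⟨x, _, hxC⟩ := SetLike.exists_of_lt (lt_top_iff_ne_top.mpr hC.1 : C < ⊤)
  set M' : Submodule A ↥M := Submodule.span A {x} with hM'
  haveI : IsArtinian A ↥M' := isArtinian_of_fg_of_artinian M' (Submodule.fg_span_singleton x)
  obtain ⟨W', hW'mem, hW'min⟩ := IsArtinian.set_has_minimal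
    (R := A) (M := ↥M') {W' | ¬ Submodule.map M'.subtype W' ≤ C}
    ⟨⊤, by
      simp only [Set.mem_setOf_eq, Submodule.map_top, Submodule.range_subtype]
      intro hle
      exact hxC (hle (Submodule.mem_span_singleton_self x))⟩
  set W : Submodule A ↥M := Submodule.map M'.subtype W' with hW
  have hWC : ¬ W ≤ C := hW'mem
  have hWne : W ≠ ⊥ := fun h => hWC (h ▸ bot_le)
  have hWM' : W ≤ M' := Submodule.map_subtype_le _ _
  -- minimality: any T < W satisfies T ≤ C
  have hmin : ∀ T : Submodule A ↥M, T < W → T ≤ C := by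
    intro T hT
    by_contra hTC
    have hTM' : T ≤ M' := le_trans hT.le hWM'
    set T' : Submodule A ↥M' := Submodule.comap M'.subtype T with hT'
    have hmapT' : Submodule.map M'.subtype T' = T := by
      rw [hT', Submodule.map_comap_subtype, inf_eq_right.mpr hTM']
    have hT'W' : T' < W' := by
      constructor
      · intro z hz
        have h2 : M'.subtype z ∈ W := hT.le hz
        obtain ⟨w, hw, hwz⟩ := h2
        rwa [← (Subtype.ext hwz : w = z)]
      · intro hle
        have := Submodule.map_mono (f := M'.subtype) hle
        rw [hmapT'] at this
        exact absurd (lt_of_le_of_lt this hT) (lt_irrefl _)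
    exact hW'min T' (by rw [Set.mem_setOf_eq, hmapT']; exact hTC) hT'W'
  -- structure of W
  have hart : IsArtinian A ↥W :=
    (Submodule.equivMapOfInjective M'.subtype M'.injective_subtype W').isArtinian_iff.mp
      inferInstance
  set Cw : Submodule A ↥W := Submodule.comap W.subtype C with hCw
  have hCwproper : Cw ≠ ⊤ := by
    intro h
    apply hWC
    intro y hy
    have : (⟨y, hy⟩ : ↥W) ∈ Cw := h ▸ trivial
    exact this
  have hproperle : ∀ Z : Submodule A ↥W, Z ≠ ⊤ → Z ≤ Cw := by
    intro Z hZ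
    have := hmin _ (proper_map_lt W Z hZ)
    intro z hz
    exact this (Submodule.mem_map_of_mem hz)
  have hCwcoatom : IsCoatom Cw := by
    refine ⟨hCwproper, fun X hX => ?_⟩
    by_contra hXne
    exact absurd (hproperle X hXne) (not_le_of_gt hX)
  -- quotient iso
  have hsup : W ⊔ C = ⊤ := by
    rcases hC.2 (W ⊔ C) (lt_of_le_of_ne le_sup_right (by
      intro h; exact hWC (h ▸ le_sup_left))) with h
    exact h
  set φ : ↥W →ₗ[A] (↥M ⧸ C) := C.mkQ.comp W.subtype with hφ
  have hφsurj : Function.Surjective φ := by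
    intro q
    obtain ⟨y, rfl⟩ := Submodule.mkQ_surjective C q
    have hy : y ∈ W ⊔ C := hsup ▸ trivial
    obtain ⟨w, hw, c, hc, rfl⟩ := Submodule.mem_sup.mp hy
    refine ⟨⟨w, hw⟩, ?_⟩
    show C.mkQ w = C.mkQ (w + c)
    have h0 : C.mkQ c = 0 := by
      simpa [Submodule.mkQ_apply, Submodule.Quotient.mk_eq_zero] using hc
    rw [map_add, h0, add_zero]
  have hφker : LinearMap.ker φ = Cw := by
    ext z
    simp [hφ, hCw, Submodule.Quotient.mk_eq_zero]
  refine ⟨W, hWne, ⟨hart⟩, ⟨Cw, hCwcoatom, fun D hD => ?_, ⟨?_⟩⟩,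
    fun N hN => ⟨Cw, hCwcoatom, hproperle N hN⟩⟩
  · have := hproperle D hD.1
    rcases eq_or_lt_of_le this with heq | hlt
    · exact heq
    · exact absurd (hD.2 _ hlt) hCwproper.elim
  · exact ((Submodule.quotEquivOfEq Cw (LinearMap.ker φ) hφker.symm).trans
      (φ.quotKerEquivOfSurjective hφsurj)).trans f

theorem main_ind [IsArtinianRing A] {I : Type*} [Finite I]
    (S : I → ModuleCat.{v} A)
    (hsimple : ∀ i, IsSimpleModule A (S i))
    (hnoniso : ∀ i j, Nonempty ((S i : Type v) ≃ₗ[A] S j) → i = j)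
    (hcomplete : ∀ M : ModuleCat.{v} A, IsSimpleModule A M →
      ∃ i, Nonempty ((M : Type v) ≃ₗ[A] S i))
    (Jm : I → ModuleCat.{v} A) (hJ : ∀ i, IsInjEnvelope A (Jm i) (S i))
    {lhd₁ lhd₂ : I → I → Prop}
    (hpo₁ : IsPartialOrder I lhd₁) (hpo₂ : IsPartialOrder I lhd₂)
    (had₁ : AdaptedMod A S lhd₁) (had₂ : AdaptedMod A S lhd₂)
    (Nabla : I → ModuleCat.{v} A)
    (hN₁ : ∀ i, IsCostandardModule A S Jm lhd₁ i (Nabla i))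
    (hN₂ : ∀ i, IsCostandardModule A S Jm lhd₂ i (Nabla i)) :
    ∀ (n : ℕ) (M : ModuleCat.{v} A), IsArtinian A ↥M →
      (∀ N : Submodule A ↥M, N ≠ ⊤ → ∃ D, IsCoatom D ∧ N ≤ D) →
      ∀ (i j : I), ({t : I | lhd₁ j t ∧ t ≠ j}).ncard ≤ n →
      HasSimpleTop A (S i) M → HasSimpleSocle A (S j) M →
      ¬(lhd₁ i j ∧ lhd₂ i j) → ¬(lhd₁ j i ∧ lhd₂ j i) →
      ∃ k, (lhd₁ i k ∧ lhd₂ i k) ∧ (lhd₁ j k ∧ lhd₂ j k) ∧ IsCompFactor A (S k) M := by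
  have hrefl₁ : ∀ a, lhd₁ a a := fun a => hpo₁.toIsPreorder.toRefl.refl a
  have hrefl₂ : ∀ a, lhd₂ a a := fun a => hpo₂.toIsPreorder.toRefl.refl a
  have htrans₁ : ∀ a b c, lhd₁ a b → lhd₁ b c → lhd₁ a c :=
    fun a b c => hpo₁.toIsPreorder.toIsTrans.trans a b c
  have htrans₂ : ∀ a b c, lhd₂ a b → lhd₂ b c → lhd₂ a c :=
    fun a b c => hpo₂.toIsPreorder.toIsTrans.trans a b c
  intro n
  induction n using Nat.strong_induction_on with
  | _ n ih =>
  intro M hart hcoa i j hcard htop hsoc hnc1 hnc2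
  haveI := hart
  -- the largest submodule V with composition factors below j
  obtain ⟨V, hVfac, hVmax₁, hVmax₂⟩ := costd_V (hN₁ j) (hN₂ j) hsoc (hJ j)
  have hSi_fac : IsCompFactor A (S i) M := by
    obtain ⟨C, hC, hCuniq, ⟨f⟩⟩ := htop
    exact cf_self_top f
  have hVtop : V ≠ ⊤ := by
    intro hVtop
    apply hnc1
    apply hVfac i
    rw [hVtop]
    exact cf_congr (M := M) (M' := ModuleCat.of A ↥(⊤ : Submodule A ↥M))
      Submodule.topEquiv.symm hSi_fac
  -- minimal submodule Y not contained in V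
  obtain ⟨Y, hYmem, hYmin'⟩ := IsArtinian.set_has_minimal (R := A) (M := ↥M)
    {Y : Submodule A ↥M | ¬ Y ≤ V} ⟨⊤, fun h => hVtop (top_le_iff.mp h)⟩
  have hY : ¬ Y ≤ V := hYmem
  have hYmin : ∀ T : Submodule A ↥M, T < Y → T ≤ V := by
    intro T hT
    by_contra h
    exact hYmin' T h hT
  have hYne : Y ≠ ⊥ := fun h => hY (h ▸ bot_le)
  set Vy : Submodule A ↥Y := Submodule.comap Y.subtype V with hVy
  have hVyproper : Vy ≠ ⊤ := by
    intro h
    apply hY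
    intro y hy
    have : (⟨y, hy⟩ : ↥Y) ∈ Vy := h ▸ trivial
    exact this
  have hproperleY : ∀ Z : Submodule A ↥Y, Z ≠ ⊤ → Z ≤ Vy := by
    intro Z hZ z hz
    exact (hYmin _ (proper_map_lt Y Z hZ)) (Submodule.mem_map_of_mem hz)
  have hVycoatom : IsCoatom Vy := by
    refine ⟨hVyproper, fun X hX => ?_⟩
    by_contra hXne
    exact absurd (hproperleY X hXne) (not_le_of_gt hX)
  have hVyuniq : ∀ D : Submodule A ↥Y, IsCoatom D → D = Vy := by
    intro D hD
    rcases eq_or_lt_of_le (hproperleY D hD.1) with heq | hlt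
    · exact heq
    · exact absurd (hD.2 _ hlt) hVyproper.elim
  have hQsimple : IsSimpleModule A (↥Y ⧸ Vy) := isSimpleModule_iff_isCoatom.mpr hVycoatom
  obtain ⟨m', ⟨fm'⟩⟩ := hcomplete (ModuleCat.of A (↥Y ⧸ Vy)) hQsimple
  have htopY : HasSimpleTop A (S m') (ModuleCat.of A ↥Y) := ⟨Vy, hVycoatom, hVyuniq, ⟨fm'⟩⟩
  have hsocY : HasSimpleSocle A (S j) (ModuleCat.of A ↥Y) := socle_submodule hsoc Y hYne
  -- classification of composition factors of Y
  have hYfac : ∀ t, IsCompFactor A (S t) (ModuleCat.of A ↥Y) →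
      t = m' ∨ (lhd₁ t j ∧ lhd₂ t j) := by
    intro t ht
    rcases cf_cases (hsimple t) (M := ModuleCat.of A ↥Y) Vy ht with h | h
    · right
      have h1 := cf_congr (M := ModuleCat.of A ↥Vy)
        (M' := ModuleCat.of A ↥(Submodule.map Y.subtype Vy))
        (Submodule.equivMapOfInjective Y.subtype Y.injective_subtype Vy) h
      have h2 : Submodule.map Y.subtype Vy ≤ V := by
        rw [hVy, Submodule.map_comap_subtype]
        exact inf_le_right
      exact hVfac t (cf_mono h2 h1)
    · left
      have h1 := cf_congr (M := ModuleCat.of A (↥Y ⧸ Vy)) (M' := S m') fm' h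
      obtain ⟨e⟩ := cf_simple (hsimple t) (hsimple m') h1
      exact (hnoniso m' t ⟨e⟩).symm
  -- m' is not below j
  have hm'j₁ : ¬ lhd₁ m' j := by
    intro hmj
    apply hY
    apply hVmax₁ Y
    intro t ht
    rcases hYfac t ht with rfl | h
    · exact hmj
    · exact h.1
  have hm'j₂ : ¬ lhd₂ m' j := by
    intro hmj
    apply hY
    apply hVmax₂ Y
    intro t ht
    rcases hYfac t ht with rfl | h
    · exact hmj
    · exact h.2
  -- j is strictly below m' in both orders
  have hD1 : lhd₁ j m' := by
    by_contra hno
    obtain ⟨t, hmt, hjt, hfac⟩ := had₁ (ModuleCat.of A ↥Y) m' j htopY hsocY hm'j₁ hno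
    rcases hYfac t hfac with rfl | h
    · exact hno hjt
    · exact hm'j₁ (htrans₁ _ _ _ hmt h.1)
  have hD2 : lhd₂ j m' := by
    by_contra hno
    obtain ⟨t, hmt, hjt, hfac⟩ := had₂ (ModuleCat.of A ↥Y) m' j htopY hsocY hm'j₂ hno
    rcases hYfac t hfac with rfl | h
    · exact hno hjt
    · exact hm'j₂ (htrans₂ _ _ _ hmt h.2)
  have hm'fac : IsCompFactor A (S m') M :=
    cf_of_submodule Y (cf_self_top (M := ModuleCat.of A ↥Y) (C := Vy) fm')
  by_cases hcomp : lhd₁ i m' ∧ lhd₂ i m'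
  · exact ⟨m', hcomp, ⟨hD1, hD2⟩, hm'fac⟩
  by_cases hrev : lhd₁ m' i ∧ lhd₂ m' i
  · exact absurd ⟨htrans₁ _ _ _ hD1 hrev.1, htrans₂ _ _ _ hD2 hrev.2⟩ hnc2
  -- recursion on a quotient of M with top S i and socle S m'
  obtain ⟨A₀, hA₀, hA₀uniq, ⟨fA₀⟩⟩ := hsoc
  have hA₀V : A₀ ≤ V := by
    apply hVmax₁
    intro t ht
    have h1 := cf_congr (M := ModuleCat.of A ↥A₀) (M' := S j) fA₀ ht
    obtain ⟨e⟩ := cf_simple (hsimple t) (hsimple j) h1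
    rw [← hnoniso j t ⟨e⟩]
    exact hrefl₁ j
  have hA₀Y : A₀ ≤ Y := socle_le hA₀ hA₀uniq Y hYne
  set Z₀ : Submodule A ↥M := Y ⊓ V with hZ₀
  have hZ₀ne : Z₀ ≠ ⊥ := fun h => hA₀.1 (le_bot_iff.mp (h ▸ le_inf hA₀Y hA₀V))
  have hZ₀proper : Z₀ ≠ ⊤ := fun h => hVtop (top_unique (h ▸ inf_le_right))
  set φE : ↥Y →ₗ[A] (↥M ⧸ Z₀) := Z₀.mkQ.comp Y.subtype with hφE
  set E : Submodule A (↥M ⧸ Z₀) := Submodule.map Z₀.mkQ Y with hE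
  have hkerφE : LinearMap.ker φE = Vy := by
    ext z
    simp only [hφE, LinearMap.mem_ker, LinearMap.comp_apply, Submodule.coe_subtype,
      Submodule.mkQ_apply, Submodule.Quotient.mk_eq_zero, hZ₀, Submodule.mem_inf,
      hVy, Submodule.mem_comap]
    exact ⟨fun h => h.2, fun h => ⟨z.2, h⟩⟩
  have hrangeφE : LinearMap.range φE = E := by
    rw [hφE, LinearMap.range_comp, Submodule.range_subtype, hE]
  have eE : (↥E : Type v) ≃ₗ[A] ↥(S m') :=
    ((LinearEquiv.ofEq _ _ hrangeφE.symm).trans φE.quotKerEquivRange.symm).trans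
      ((Submodule.quotEquivOfEq _ _ hkerφE).trans fm')
  have hEatom : IsAtom E := by
    haveI := hsimple m'
    exact isSimpleModule_iff_isAtom.mp (IsSimpleModule.congr eE)
  obtain ⟨Zb, hZb1, hZb2⟩ := exists_max_avoid (M := ModuleCat.of A (↥M ⧸ Z₀)) E
  have hsocX : HasSimpleSocle A (S m')
      (ModuleCat.of A ((↥M ⧸ Z₀) ⧸ Zb)) :=
    socle_of_max_avoid (M := ModuleCat.of A (↥M ⧸ Z₀)) hEatom hZb1 hZb2 ⟨eE⟩
  have hZbproper : Zb ≠ ⊤ := fun h => hEatom.1 (by rw [← hZb1, h, top_inf_eq])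
  obtain ⟨htopQ, hcoaQ⟩ := top_quot htop hcoa Z₀ hZ₀proper
  obtain ⟨htopX, hcoaX⟩ := top_quot (M := ModuleCat.of A (↥M ⧸ Z₀)) htopQ hcoaQ Zb hZbproper
  -- measure decreases
  have hm'm : m' ∈ {t : I | lhd₁ j t ∧ t ≠ j} :=
    ⟨hD1, fun h => hm'j₁ (h ▸ hrefl₁ m')⟩
  have hmea : ({t : I | lhd₁ m' t ∧ t ≠ m'}).ncard < ({t : I | lhd₁ j t ∧ t ≠ j}).ncard := by
    apply Set.ncard_lt_ncard
    · refine ⟨fun t ht => ⟨htrans₁ _ _ _ hD1 ht.1, fun h => hm'j₁ (h ▸ ht.1)⟩, ?_⟩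
      intro hsup
      exact (hsup hm'm).2 rfl
    · exact Set.toFinite _
  haveI hart1 : IsArtinian A (↥M ⧸ Z₀) := isArtinian_of_quotient_of_artinian (R := A) (M := ↥M) Z₀
  haveI hart2 : IsArtinian A ((↥M ⧸ Z₀) ⧸ Zb) := isArtinian_of_quotient_of_artinian (R := A) (M := ↥M ⧸ Z₀) Zb
  obtain ⟨k, hik, hm'k, hkfac⟩ := ih _ (lt_of_lt_of_le hmea hcard)
    (ModuleCat.of A ((↥M ⧸ Z₀) ⧸ Zb)) hart2 hcoaX i m' le_rfl htopX hsocX hcomp hrev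
  exact ⟨k, hik, ⟨htrans₁ _ _ _ hD1 hm'k.1, htrans₂ _ _ _ hD2 hm'k.2⟩,
    cf_of_quotient (M := M) Z₀
      (cf_of_quotient (M := ModuleCat.of A (↥M ⧸ Z₀)) Zb hkfac)⟩

theorem inter_adapted [IsArtinianRing A] {I : Type*} [Finite I]
    (S : I → ModuleCat.{v} A)
    (hsimple : ∀ i, IsSimpleModule A (S i))
    (hnoniso : ∀ i j, Nonempty ((S i : Type v) ≃ₗ[A] S j) → i = j)
    (hcomplete : ∀ M : ModuleCat.{v} A, IsSimpleModule A M →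
      ∃ i, Nonempty ((M : Type v) ≃ₗ[A] S i))
    (Jm : I → ModuleCat.{v} A) (hJ : ∀ i, IsInjEnvelope A (Jm i) (S i))
    {lhd₁ lhd₂ : I → I → Prop}
    (hpo₁ : IsPartialOrder I lhd₁) (hpo₂ : IsPartialOrder I lhd₂)
    (had₁ : AdaptedMod A S lhd₁) (had₂ : AdaptedMod A S lhd₂)
    (Nabla : I → ModuleCat.{v} A)
    (hN₁ : ∀ i, IsCostandardModule A S Jm lhd₁ i (Nabla i))
    (hN₂ : ∀ i, IsCostandardModule A S Jm lhd₂ i (Nabla i)) :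
    AdaptedMod A S (fun a b => lhd₁ a b ∧ lhd₂ a b) := by
  intro M i j htop hsoc hnc1 hnc2
  obtain ⟨W, hWne, ⟨hartW⟩, htopW, hcoaW⟩ := exists_local_submodule htop
  have hsocW : HasSimpleSocle A (S j) (ModuleCat.of A ↥W) := socle_submodule hsoc W hWne
  obtain ⟨k, hik, hjk, hkfac⟩ := main_ind S hsimple hnoniso hcomplete Jm hJ hpo₁ hpo₂
    had₁ had₂ Nabla hN₁ hN₂ ({t : I | lhd₁ j t ∧ t ≠ j}).ncard
    (ModuleCat.of A ↥W) hartW hcoaW i j le_rfl htopW hsocW hnc1 hnc2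
  exact ⟨k, hik, hjk, cf_of_submodule W hkfac⟩

theorem inter_std {I : Type*} (S P : I → ModuleCat.{v} A) {lhd₁ lhd₂ : I → I → Prop}
    {Δ : I → ModuleCat.{v} A}
    (hΔ₁ : ∀ i, IsStandardModule A S P lhd₁ i (Δ i))
    (hΔ₂ : ∀ i, IsStandardModule A S P lhd₂ i (Δ i)) (i : I) :
    IsStandardModule A S P (fun a b => lhd₁ a b ∧ lhd₂ a b) i (Δ i) := by
  obtain ⟨K₁, hiso₁, hfac₁, hmax₁⟩ := hΔ₁ i
  obtain ⟨K₂, hiso₂, hfac₂, hmax₂⟩ := hΔ₂ i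
  exact ⟨K₁, hiso₁, fun t ht => ⟨hfac₁ t ht, hfac₂ t ht⟩,
    fun N hN => hmax₁ N (fun t ht => (hN t ht).1)⟩

theorem inter_costd {I : Type*} (S Jm : I → ModuleCat.{v} A) {lhd₁ lhd₂ : I → I → Prop}
    {Nabla : I → ModuleCat.{v} A}
    (hN₁ : ∀ i, IsCostandardModule A S Jm lhd₁ i (Nabla i))
    (hN₂ : ∀ i, IsCostandardModule A S Jm lhd₂ i (Nabla i)) (i : I) :
    IsCostandardModule A S Jm (fun a b => lhd₁ a b ∧ lhd₂ a b) i (Nabla i) := by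
  obtain ⟨K₁, hiso₁, hfac₁, hmax₁⟩ := hN₁ i
  obtain ⟨K₂, hiso₂, hfac₂, hmax₂⟩ := hN₂ i
  exact ⟨K₁, hiso₁, fun t ht => ⟨hfac₁ t ht, hfac₂ t ht⟩,
    fun N hN => hmax₁ N (fun t ht => (hN t ht).1)⟩

theorem inter_po {I : Type*} {lhd₁ lhd₂ : I → I → Prop}
    (hpo₁ : IsPartialOrder I lhd₁) (hpo₂ : IsPartialOrder I lhd₂) :
    IsPartialOrder I (fun a b => lhd₁ a b ∧ lhd₂ a b) :=
  { refl := fun a => ⟨hpo₁.toIsPreorder.toRefl.refl a, hpo₂.toIsPreorder.toRefl.refl a⟩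
    trans := fun a b c h h' => ⟨hpo₁.toIsPreorder.toIsTrans.trans a b c h.1 h'.1,
      hpo₂.toIsPreorder.toIsTrans.trans a b c h.2 h'.2⟩
    antisymm := fun a b hab hba => hpo₁.toAntisymm.antisymm a b hab.1 hba.1 }

end AuxLemmas

theorem intersection_adapted_and_unique_minimal
    {A : Type u} [Ring A] [IsArtinianRing A] {I : Type*} [Finite I]
    (S : I → ModuleCat.{v} A)
    (hsimple : ∀ i, IsSimpleModule A (S i))
    (hnoniso : ∀ i j, Nonempty ((S i : Type v) ≃ₗ[A] S j) → i = j)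
    (hcomplete : ∀ M : ModuleCat.{v} A, IsSimpleModule A M → ∃ i, Nonempty ((M : Type v) ≃ₗ[A] S i))
    (P : I → ModuleCat.{v} A) (hP : ∀ i, IsProjCover A (P i) (S i))
    (J : I → ModuleCat.{v} A) (hJ : ∀ i, IsInjEnvelope A (J i) (S i))
    (lhd₁ lhd₂ : I → I → Prop)
    (hpo₁ : IsPartialOrder I lhd₁) (hpo₂ : IsPartialOrder I lhd₂)
    (had₁ : AdaptedMod A S lhd₁) (had₂ : AdaptedMod A S lhd₂)
    -- `⊲₁` and `⊲₂` are in the same equivalence class: they admit common standard modules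
    -- `Δ` and common costandard modules `∇`
    (Δ : I → ModuleCat.{v} A) (Nabla : I → ModuleCat.{v} A)
    (hΔ₁ : ∀ i, IsStandardModule A S P lhd₁ i (Δ i))
    (hΔ₂ : ∀ i, IsStandardModule A S P lhd₂ i (Δ i))
    (hN₁ : ∀ i, IsCostandardModule A S J lhd₁ i (Nabla i))
    (hN₂ : ∀ i, IsCostandardModule A S J lhd₂ i (Nabla i)) :
    -- (1) the intersection is adapted and lies in the same equivalence class
    (AdaptedMod A S (fun i j => lhd₁ i j ∧ lhd₂ i j) ∧
      (∀ i, IsStandardModule A S P (fun i j => lhd₁ i j ∧ lhd₂ i j) i (Δ i)) ∧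
      (∀ i, IsCostandardModule A S J (fun i j => lhd₁ i j ∧ lhd₂ i j) i (Nabla i))) ∧
    -- (2) the equivalence class of `⊲₁` contains a unique minimal (least) partial order
    (∃ lhd₀ : I → I → Prop,
      (IsPartialOrder I lhd₀ ∧ AdaptedMod A S lhd₀ ∧
        (∀ i, IsStandardModule A S P lhd₀ i (Δ i)) ∧
        (∀ i, IsCostandardModule A S J lhd₀ i (Nabla i))) ∧
      ∀ lhd : I → I → Prop, IsPartialOrder I lhd → AdaptedMod A S lhd →
        (∀ i, IsStandardModule A S P lhd i (Δ i)) →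
        (∀ i, IsCostandardModule A S J lhd i (Nabla i)) →
        ∀ i j, lhd₀ i j → lhd i j) := by
  constructor
  · exact ⟨inter_adapted S hsimple hnoniso hcomplete J hJ hpo₁ hpo₂ had₁ had₂ Nabla hN₁ hN₂,
      inter_std S P hΔ₁ hΔ₂, inter_costd S J hN₁ hN₂⟩
  · -- minimality via a relation in the family of minimal cardinality
    set F : (I → I → Prop) → Prop := fun r =>
      IsPartialOrder I r ∧ AdaptedMod A S r ∧
        (∀ i, IsStandardModule A S P r i (Δ i)) ∧
        (∀ i, IsCostandardModule A S J r i (Nabla i)) with hF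
    set pairs : (I → I → Prop) → Set (I × I) := fun r => {p : I × I | r p.1 p.2} with hpairs
    set C : Set ℕ := {n : ℕ | ∃ r, F r ∧ (pairs r).ncard = n} with hC
    have hCne : C.Nonempty := ⟨(pairs lhd₁).ncard, lhd₁, ⟨hpo₁, had₁, hΔ₁, hN₁⟩, rfl⟩
    obtain ⟨r₀, hr₀F, hr₀card⟩ := Nat.sInf_mem hCne
    refine ⟨r₀, hr₀F, ?_⟩
    intro r hrpo hrad hrΔ hrN i j hij
    have hrF : F r := ⟨hrpo, hrad, hrΔ, hrN⟩
    -- the intersection r ⊓ r₀ is again in the family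
    have hinterF : F (fun a b => r a b ∧ r₀ a b) := by
      refine ⟨inter_po hrpo hr₀F.1, ?_, ?_, ?_⟩
      · exact inter_adapted S hsimple hnoniso hcomplete J hJ hrpo hr₀F.1 hrad hr₀F.2.1
          Nabla hrN hr₀F.2.2.2
      · exact inter_std S P hrΔ hr₀F.2.2.1
      · exact inter_costd S J hrN hr₀F.2.2.2
    have hsub : pairs (fun a b => r a b ∧ r₀ a b) ⊆ pairs r₀ := fun p hp => hp.2
    have hle : sInf C ≤ (pairs (fun a b => r a b ∧ r₀ a b)).ncard :=
      Nat.sInf_le ⟨_, hinterF, rfl⟩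
    have heq : pairs (fun a b => r a b ∧ r₀ a b) = pairs r₀ := by
      exact Set.eq_of_subset_of_ncard_le hsub (by rw [hr₀card]; exact hle) (Set.toFinite _)
    have : (⟨i, j⟩ : I × I) ∈ pairs (fun a b => r a b ∧ r₀ a b) := by
      rw [heq]; exact hij
    exact this.1
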